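/- arXiv:1005.2639 — 4 statements merged into one kernel-verified Lean document; each statement's English description precedes it below -/
import Mathlib

section
/- Let $d_1 > d_2 > \cdots > d_s > \tau_0$ be reals and $K_i = \prod_{j \neq i}(d_j - \tau_0)/(d_j - d_i)$. Then $|K_1| < |K_2|$. -/
theorem stmt_3 (s : ℕ) (hs : 2 ≤ s) (d : Fin s → ℝ) (τ₀ : ℝ)
    (hanti : ∀ i j : Fin s, i < j → d j < d i)
    (hτ : ∀ i, τ₀ < d i)
    (K : Fin s → ℝ)
    (hK : ∀ i, K i = ∏ j ∈ Finset.univ.erase i, (d j - τ₀) / (d j - d i)) :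
    |K ⟨0, by omega⟩| < |K ⟨1, by omega⟩| := by
  set i0 : Fin s := ⟨0, by omega⟩
  set i1 : Fin s := ⟨1, by omega⟩
  have hne : i0 ≠ i1 := by simp [i0, i1, Fin.ext_iff]
  have h01 : d i1 < d i0 := hanti i0 i1 (by simp [i0, i1, Fin.lt_def])
  set f : Fin s → ℝ := fun j => |(d j - τ₀) / (d j - d i0)| with hf
  set g : Fin s → ℝ := fun j => |(d j - τ₀) / (d j - d i1)| with hg
  have hK0 : |K i0| = ∏ j ∈ Finset.univ.erase i0, f j := by
    rw [hK, Finset.abs_prod]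
  have hK1 : |K i1| = ∏ j ∈ Finset.univ.erase i1, g j := by
    rw [hK, Finset.abs_prod]
  have hperm : ∏ j ∈ Finset.univ.erase i0, f j
      = ∏ j ∈ Finset.univ.erase i1, f (Equiv.swap i0 i1 j) := by
    refine (Finset.prod_equiv (Equiv.swap i0 i1) ?_ ?_).symm
    · intro j
      simp only [Finset.mem_erase, Finset.mem_univ, and_true]
      constructor
      · intro h h'
        exact h (by
          have := congrArg (Equiv.swap i0 i1) h'
          rwa [Equiv.swap_apply_self, Equiv.swap_apply_left] at this)
      · intro h h'
        exact h (by rw [h', Equiv.swap_apply_right])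
    · intro j _
      rfl
  rw [hK0, hK1, hperm]
  refine Finset.prod_lt_prod_of_nonempty ?_ ?_ ?_
  · intro j hj
    simp only [Finset.mem_erase, Finset.mem_univ, and_true] at hj
    have hnum : 0 < d (Equiv.swap i0 i1 j) - τ₀ := sub_pos.mpr (hτ _)
    have hden : d (Equiv.swap i0 i1 j) ≠ d i0 := by
      intro h
      have : Equiv.swap i0 i1 j ≠ i0 := by
        intro h'
        apply hj
        have := congrArg (Equiv.swap i0 i1) h'
        rwa [Equiv.swap_apply_self, Equiv.swap_apply_left] at this
      rcases lt_or_gt_of_ne (show Equiv.swap i0 i1 j ≠ i0 from this) with hlt | hgt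
      · exact absurd h (ne_of_gt (hanti _ _ hlt))
      · exact absurd h (ne_of_lt (hanti _ _ hgt))
    simp only [hf]
    exact abs_pos.mpr (div_ne_zero (ne_of_gt hnum) (sub_ne_zero.mpr hden))
  · intro j hj
    simp only [Finset.mem_erase, Finset.mem_univ, and_true] at hj
    by_cases h0 : j = i0
    · subst h0
      rw [show Equiv.swap i0 i1 i0 = i1 from Equiv.swap_apply_left i0 i1]
      simp only [hf, hg]
      have h1 : d i1 - d i0 < 0 := sub_neg.mpr h01
      have h2 : 0 < d i0 - d i1 := sub_pos.mpr h01
      rw [abs_div, abs_div, abs_of_pos (sub_pos.mpr (hτ i1)),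
        abs_of_pos (sub_pos.mpr (hτ i0)), abs_of_neg h1, abs_of_pos h2,
        neg_sub]
      gcongr
    · have hswap : Equiv.swap i0 i1 j = j := Equiv.swap_apply_of_ne_of_ne h0 hj
      rw [hswap]
      have hj1 : i1 < j := by
        have h0' : j.val ≠ 0 := fun h => h0 (Fin.val_injective h)
        have h1' : j.val ≠ 1 := fun h => hj (Fin.val_injective h)
        rw [Fin.lt_def]
        show 1 < j.val
        omega
      have hjlt : d j < d i1 := hanti i1 j hj1
      simp only [hf, hg]
      have h1 : d j - d i0 < 0 := by linarith
      have h2 : d j - d i1 < 0 := by linarith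
      rw [abs_div, abs_div, abs_of_pos (sub_pos.mpr (hτ j)),
        abs_of_neg h1, abs_of_neg h2, neg_sub, neg_sub]
      have hnum : 0 < d j - τ₀ := sub_pos.mpr (hτ j)
      apply div_lt_div_of_pos_left hnum (by linarith) (by linarith)
  · exact ⟨i0, by simp [Finset.mem_erase, hne]⟩
end

section
/- For $n \geq 2s$, the set $X \subseteq \mathbb{F}_2^n$ consisting of all binary vectors whose Hamming weight $k$ satisfies $k \leq s$ and $k \equiv s \pmod 2$ is an $s$-distance set in the Hamming metric; in particular, the set of Hamming distances between distinct elements of $X$ has cardinality exactly $s$, and $|X| = \sum_{i=0}^{\lfloor s/2 \rfloor} \binom{n}{s - 2i}$. -/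
open Finset

lemma card_filter_ico (n a b : ℕ) (hb : b ≤ n) :
    (univ.filter fun i : Fin n => a ≤ (i:ℕ) ∧ (i:ℕ) < b).card = b - a := by
  have h : ∀ m ∈ Finset.Ico a b, m < n := fun m hm => lt_of_lt_of_le (mem_Ico.mp hm).2 hb
  have : (univ.filter fun i : Fin n => a ≤ (i:ℕ) ∧ (i:ℕ) < b) = (Finset.Ico a b).attachFin h := by
    ext i; simp [Finset.mem_attachFin, Finset.mem_Ico]
  rw [this, Finset.card_attachFin, Nat.card_Ico]

lemma norm_cast' (n : ℕ) (x : Fin n → ZMod 2) :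
    (hammingNorm x : ZMod 2) = ∑ i, x i := by
  rw [hammingNorm, ← Finset.sum_filter_ne_zero (univ)]
  rw [Finset.card_eq_sum_ones, Nat.cast_sum]
  apply Finset.sum_congr rfl
  intro i hi
  have := (Finset.mem_filter.mp hi).2
  have : x i = 1 := by revert this; generalize x i = a; revert a; decide
  simp [this]

lemma card_sphere (n k : ℕ) :
    (univ.filter fun x : Fin n → ZMod 2 => hammingNorm x = k).card = n.choose k := by
  have hc := Finset.card_powersetCard k (univ : Finset (Fin n))
  rw [Finset.card_fin] at hc
  rw [← hc]
  apply Finset.card_bij (fun x _ => univ.filter fun i => x i ≠ 0)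
  · intro x hx
    rw [Finset.mem_powersetCard_univ]
    exact (Finset.mem_filter.mp hx).2
  · intro x hx y hy h
    funext i
    have : (x i ≠ 0) ↔ (y i ≠ 0) := by
      have h1 : i ∈ univ.filter (fun i => x i ≠ 0) ↔ i ∈ univ.filter (fun i => y i ≠ 0) := by rw [h]
      simpa using h1
    revert this; generalize x i = a; generalize y i = b; revert a b; decide
  · intro t ht
    rw [Finset.mem_powersetCard_univ] at ht
    refine ⟨fun i => if i ∈ t then 1 else 0, ?_, ?_⟩
    · simp only [Finset.mem_filter, Finset.mem_univ, true_and, hammingNorm]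
      rw [← ht]
      congr 1
      ext i
      by_cases h : i ∈ t <;> simp [h]
    · ext i
      by_cases h : i ∈ t <;> simp [h]

theorem stmt_6 (n s : ℕ) (hs : 1 ≤ s) (hn : 2 * s ≤ n)
    (X : Finset (Fin n → ZMod 2))
    (hX : X = Finset.univ.filter
      (fun x => hammingNorm x ≤ s ∧ hammingNorm x % 2 = s % 2)) :
    ((X.offDiag.image fun p => hammingDist p.1 p.2).card = s) ∧
    X.card = ∑ i ∈ Finset.range (s / 2 + 1), n.choose (s - 2 * i) := by
  subst hX
  constructor
  · -- distance set has size s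
    have himg : (Finset.offDiag (univ.filter
        (fun x : Fin n → ZMod 2 => hammingNorm x ≤ s ∧ hammingNorm x % 2 = s % 2))).image
          (fun p => hammingDist p.1 p.2) = (Finset.Icc 1 s).image (fun j => 2 * j) := by
      ext d
      simp only [Finset.mem_image, Finset.mem_offDiag, Finset.mem_filter, Finset.mem_univ,
        true_and, Finset.mem_Icc]
      constructor
      · rintro ⟨⟨x, y⟩, ⟨⟨hx1, hx2⟩, ⟨hy1, hy2⟩, hne⟩, rfl⟩
        dsimp only at hx1 hx2 hy1 hy2 hne ⊢
        have hpos : 0 < hammingDist x y := hammingDist_pos.mpr hne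
        have hle : hammingDist x y ≤ 2 * s := by
          have := hammingDist_triangle x 0 y
          rw [hammingDist_zero_right] at this
          have h2 : hammingDist 0 y = hammingNorm y := by
            rw [hammingDist_comm, hammingDist_zero_right]
          rw [h2] at this
          omega
        have heven : 2 ∣ hammingDist x y := by
          rw [← ZMod.natCast_eq_zero_iff]
          rw [hammingDist_eq_hammingNorm, norm_cast']
          have hsum : ∑ i, (x - y) i = ∑ i, x i - ∑ i, y i := by
            simp [Finset.sum_sub_distrib]
          have hxc : (hammingNorm x : ZMod 2) = (s : ZMod 2) :=
            (ZMod.natCast_eq_natCast_iff _ _ _).mpr hx2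
          have hyc : (hammingNorm y : ZMod 2) = (s : ZMod 2) :=
            (ZMod.natCast_eq_natCast_iff _ _ _).mpr hy2
          have hxy : -x + y = x - y := by
            funext i; show -x i + y i = x i - y i
            generalize x i = a; generalize y i = b; revert a b; decide
          rw [hxy, hsum, ← norm_cast', ← norm_cast', hxc, hyc, sub_self]
        exact ⟨hammingDist x y / 2, ⟨by omega, by omega⟩, by omega⟩
      · rintro ⟨j, ⟨hj1, hj2⟩, rfl⟩
        set x : Fin n → ZMod 2 := fun i => if (i:ℕ) < s then 1 else 0 with hxdef
        set y : Fin n → ZMod 2 := fun i => if j ≤ (i:ℕ) ∧ (i:ℕ) < s + j then 1 else 0 with hydef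
        have hnx : hammingNorm x = s := by
          rw [hammingNorm]
          have : ({i | x i ≠ 0} : Finset (Fin n)) =
              univ.filter fun i : Fin n => 0 ≤ (i:ℕ) ∧ (i:ℕ) < s := by
            ext i
            by_cases h : (i:ℕ) < s <;> simp [hxdef, h]
          rw [this, card_filter_ico n 0 s (by omega)]
          omega
        have hny : hammingNorm y = s := by
          rw [hammingNorm]
          have : ({i | y i ≠ 0} : Finset (Fin n)) =
              univ.filter fun i : Fin n => j ≤ (i:ℕ) ∧ (i:ℕ) < s + j := by
            ext i
            by_cases h : j ≤ (i:ℕ) ∧ (i:ℕ) < s + j <;> simp [hydef, h]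
          rw [this, card_filter_ico n j (s + j) (by omega)]
          omega
        have hdist : hammingDist x y = 2 * j := by
          rw [hammingDist]
          have hsplit : ({i | x i ≠ y i} : Finset (Fin n)) =
              (univ.filter fun i : Fin n => 0 ≤ (i:ℕ) ∧ (i:ℕ) < j) ∪
              (univ.filter fun i : Fin n => s ≤ (i:ℕ) ∧ (i:ℕ) < s + j) := by
            rw [← Finset.filter_or]
            ext i
            simp only [Finset.mem_filter, Finset.mem_univ, true_and]
            by_cases h1 : (i:ℕ) < s <;> by_cases h2 : j ≤ (i:ℕ) ∧ (i:ℕ) < s + j <;>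
              simp [hxdef, hydef, h1, h2] <;> omega
          rw [hsplit, Finset.card_union_of_disjoint, card_filter_ico n 0 j (by omega),
            card_filter_ico n s (s + j) (by omega)]
          · omega
          · rw [Finset.disjoint_left]
            intro a ha hb
            simp only [Finset.mem_filter] at ha hb
            omega
        have hne : x ≠ y := by
          intro h
          rw [h, hammingDist_self] at hdist
          omega
        exact ⟨(x, y), ⟨⟨le_of_eq hnx, congrArg (· % 2) hnx⟩,
          ⟨le_of_eq hny, congrArg (· % 2) hny⟩, hne⟩, hdist⟩
    rw [himg, Finset.card_image_of_injective _ (mul_right_injective₀ (two_ne_zero)),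
      Nat.card_Icc]
    omega
  · -- cardinality
    have hsplit : (univ.filter
        (fun x : Fin n → ZMod 2 => hammingNorm x ≤ s ∧ hammingNorm x % 2 = s % 2)) =
        (Finset.range (s / 2 + 1)).biUnion
          (fun i => univ.filter fun x : Fin n → ZMod 2 => hammingNorm x = s - 2 * i) := by
      ext x
      simp only [Finset.mem_filter, Finset.mem_univ, true_and, Finset.mem_biUnion,
        Finset.mem_range]
      constructor
      · rintro ⟨h1, h2⟩
        exact ⟨(s - hammingNorm x) / 2, by omega, by omega⟩
      · rintro ⟨i, hi, he⟩
        omega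
    rw [hsplit, Finset.card_biUnion]
    · exact Finset.sum_congr rfl fun i _ => card_sphere n (s - 2 * i)
    · intro i hi j hj hij
      rw [Function.onFun, Finset.disjoint_left]
      intro x hx hy
      simp only [Finset.mem_filter, Finset.mem_univ, true_and] at hx hy
      simp only [Finset.mem_coe, Finset.mem_range] at hi hj
      omega
end

section
/- Let $2s \leq n+1$ and let $X \subseteq \mathbb{R}^{n+1}$ be the set of all 0-1 vectors of length $n+1$ with exactly $s$ entries equal to $1$. Then $X$ lies on a hyperplane orthogonal to the all-ones vector intersected with a sphere, and the set of Euclidean distances between distinct points of $X$ has cardinality exactly $s$; moreover $|X| = \binom{n+1}{s}$. Consequently there exists a spherical $s$-distance set in $S^{n-1}$ with $\binom{n+1}{s}$ points. -/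
open scoped Classical

noncomputable def ind (n : ℕ) (A : Finset (Fin (n+1))) : EuclideanSpace ℝ (Fin (n+1)) :=
  WithLp.toLp 2 (fun i => if i ∈ A then (1:ℝ) else 0)

lemma ind_inj (n : ℕ) : Function.Injective (ind n) := by
  intro A B h
  ext i
  have := congrArg (fun v => v i) h
  simp only [ind] at this
  by_cases hA : i ∈ A <;> by_cases hB : i ∈ B <;> simp_all

lemma sum_ind (n : ℕ) (A : Finset (Fin (n+1))) : ∑ i, ind n A i = A.card := by
  simp [ind, Finset.sum_ite_mem]

lemma dist_ind (n : ℕ) (A B : Finset (Fin (n+1))) :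
    dist (ind n A) (ind n B) = Real.sqrt (((A \ B).card + (B \ A).card : ℕ)) := by
  rw [EuclideanSpace.dist_eq]
  simp only [Real.dist_eq, sq_abs]
  congr 1
  have : ∀ i, (ind n A i - ind n B i)^2
      = (if i ∈ A \ B then (1:ℝ) else 0) + (if i ∈ B \ A then 1 else 0) := by
    intro i
    simp only [ind, Finset.mem_sdiff]
    by_cases hA : i ∈ A <;> by_cases hB : i ∈ B <;> simp [hA, hB]
  simp only [this, Finset.sum_add_distrib, Finset.sum_ite_mem, Finset.univ_inter,
    Finset.sum_const, nsmul_eq_mul, mul_one]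
  push_cast
  ring

lemma card_sdiff_eq (n s : ℕ) (A B : Finset (Fin (n+1))) (hA : A.card = s) :
    (A \ B).card = s - (A ∩ B).card := by
  have := Finset.card_sdiff_add_card_inter A B
  omega

lemma dist_ind_card (n s : ℕ) (A B : Finset (Fin (n+1))) (hA : A.card = s) (hB : B.card = s) :
    dist (ind n A) (ind n B) = Real.sqrt ((2 * (s - (A ∩ B).card) : ℕ)) := by
  rw [dist_ind, card_sdiff_eq n s A B hA, card_sdiff_eq n s B A hB, Finset.inter_comm B A]
  ring_nf

lemma inter_card_lt (s : ℕ) {α : Type*} [DecidableEq α] (A B : Finset α)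
    (hA : A.card = s) (hB : B.card = s) (hne : A ≠ B) : (A ∩ B).card < s := by
  rcases lt_or_ge ((A ∩ B).card) s with h | h
  · exact h
  · exfalso
    have h1 : A ∩ B = A := Finset.eq_of_subset_of_card_le Finset.inter_subset_left (by omega)
    have h2 : A ⊆ B := by rw [← h1]; exact Finset.inter_subset_right
    exact hne (Finset.eq_of_subset_of_card_le h2 (by omega))

open scoped Classical in
lemma mem_X (n s : ℕ) (x : EuclideanSpace ℝ (Fin (n+1))) :
    x ∈ (Finset.univ.powersetCard s).image
      (fun A : Finset (Fin (n + 1)) =>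
        (WithLp.toLp 2 (fun i => if i ∈ A then (1 : ℝ) else 0) : EuclideanSpace ℝ (Fin (n + 1))))
      ↔ ∃ A : Finset (Fin (n+1)), A.card = s ∧ ind n A = x := by
  unfold ind
  simp [Finset.mem_powersetCard]

lemma exists_pair (n s j : ℕ) (hn : 2 * s ≤ n + 1) (hj : 1 ≤ j) (hjs : j ≤ s) :
    ∃ A B : Finset (Fin (n+1)), A.card = s ∧ B.card = s ∧ A ≠ B ∧ (A ∩ B).card = s - j := by
  obtain ⟨A, -, hA⟩ := Finset.exists_subset_card_eq (s := (Finset.univ : Finset (Fin (n+1)))) (n := s)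
    (by simp; omega)
  obtain ⟨C, hCA, hC⟩ := Finset.exists_subset_card_eq (s := A) (n := s - j) (by omega)
  obtain ⟨D, hDA, hD⟩ := Finset.exists_subset_card_eq (s := (Finset.univ \ A)) (n := j)
    (by rw [Finset.card_sdiff_of_subset (Finset.subset_univ A)]; simp [hA]; omega)
  have hdisj : Disjoint C D := by
    apply Finset.disjoint_left.mpr
    intro a ha hd
    exact (Finset.mem_sdiff.mp (hDA hd)).2 (hCA ha)
  have hAD : Disjoint A D := by
    apply Finset.disjoint_left.mpr
    intro a ha hd
    exact (Finset.mem_sdiff.mp (hDA hd)).2 ha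
  refine ⟨A, C ∪ D, hA, ?_, ?_, ?_⟩
  · rw [Finset.card_union_of_disjoint hdisj, hC, hD]; omega
  · intro h
    have : (A ∩ (C ∪ D)).card = s := by rw [← h, Finset.inter_self, hA]
    rw [Finset.inter_union_distrib_left,
      Finset.inter_eq_right.mpr hCA, Finset.disjoint_iff_inter_eq_empty.mp hAD,
      Finset.union_empty, hC] at this
    omega
  · rw [Finset.inter_union_distrib_left,
      Finset.inter_eq_right.mpr hCA, Finset.disjoint_iff_inter_eq_empty.mp hAD,
      Finset.union_empty, hC]

open scoped Classical in
lemma distset_eq (n s : ℕ) (hs : 1 ≤ s) (hn : 2 * s ≤ n + 1)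
    (X : Finset (EuclideanSpace ℝ (Fin (n + 1))))
    (hX : X = (Finset.univ.powersetCard s).image
      (fun A : Finset (Fin (n + 1)) =>
        (WithLp.toLp 2 (fun i => if i ∈ A then (1 : ℝ) else 0) : EuclideanSpace ℝ (Fin (n + 1))))) :
    (X.offDiag.image fun p => dist p.1 p.2)
      = (Finset.Icc 1 s).image (fun j : ℕ => Real.sqrt ((2 * j : ℕ))) := by
  subst hX
  ext d
  constructor
  · intro hd
    obtain ⟨p, hp, rfl⟩ := Finset.mem_image.mp hd
    obtain ⟨hx, hy, hxy⟩ := Finset.mem_offDiag.mp hp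
    obtain ⟨A, hA, hA'⟩ := (mem_X n s p.1).mp hx
    obtain ⟨B, hB, hB'⟩ := (mem_X n s p.2).mp hy
    have hne : A ≠ B := fun h => hxy (by rw [← hA', ← hB', h])
    have ht : (A ∩ B).card < s := inter_card_lt s A B hA hB hne
    refine Finset.mem_image.mpr ⟨s - (A ∩ B).card, Finset.mem_Icc.mpr ⟨by omega, by omega⟩, ?_⟩
    rw [← hA', ← hB']
    exact (dist_ind_card n s A B hA hB).symm
  · intro hd
    obtain ⟨j, hj, rfl⟩ := Finset.mem_image.mp hd
    obtain ⟨hj1, hj2⟩ := Finset.mem_Icc.mp hj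
    obtain ⟨A, B, hA, hB, hne, hAB⟩ := exists_pair n s j hn hj1 hj2
    refine Finset.mem_image.mpr ⟨(ind n A, ind n B), Finset.mem_offDiag.mpr
      ⟨(mem_X n s _).mpr ⟨A, hA, rfl⟩, (mem_X n s _).mpr ⟨B, hB, rfl⟩,
        fun h => hne (ind_inj n h)⟩, ?_⟩
    have := dist_ind_card n s A B hA hB
    rw [hAB] at this
    rw [show s - (s - j) = j from by omega] at this
    exact this

lemma card_sqrt_image (s : ℕ) :
    ((Finset.Icc 1 s).image (fun j : ℕ => Real.sqrt ((2 * j : ℕ)))).card = s := by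
  rw [Finset.card_image_of_injOn, Nat.card_Icc]
  · omega
  · intro a _ b _ hab
    simp only at hab
    have : ((2 * a : ℕ) : ℝ) = ((2 * b : ℕ) : ℝ) :=
      (Real.sqrt_inj (by positivity) (by positivity)).mp hab
    have h2 : 2 * a = 2 * b := by exact_mod_cast this
    omega

lemma norm_ind (n : ℕ) (A : Finset (Fin (n+1))) : ‖ind n A‖ = Real.sqrt A.card := by
  rw [EuclideanSpace.norm_eq]
  simp only [Real.norm_eq_abs, sq_abs]
  congr 1
  have : ∀ i, ‖ind n A i‖ ^ 2 = (if i ∈ A then (1:ℝ) else 0) := by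
    intro i
    simp only [ind]
    by_cases h : i ∈ A <;> simp [h]
  simp only [Real.norm_eq_abs, sq_abs] at this
  simp [this, Finset.sum_ite_mem]

noncomputable def Lfun (n : ℕ) : EuclideanSpace ℝ (Fin (n+1)) →ₗ[ℝ] ℝ where
  toFun x := ∑ i, x i
  map_add' x y := by simp [Finset.sum_add_distrib]
  map_smul' c x := by simp [Finset.mul_sum]

lemma finrank_ker_Lfun (n : ℕ) : Module.finrank ℝ (LinearMap.ker (Lfun n)) = n := by
  have hsurj : Function.Surjective (Lfun n) := by
    intro y
    refine ⟨EuclideanSpace.single 0 y, ?_⟩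
    simp [Lfun, EuclideanSpace.single_apply]
  have h := LinearMap.finrank_range_add_finrank_ker (Lfun n)
  rw [LinearMap.range_eq_top.mpr hsurj, finrank_top, finrank_euclideanSpace_fin] at h
  simp at h
  omega

open scoped Classical in
lemma distset_scale {E F : Type*} [MetricSpace E] [MetricSpace F]
    (f : E → F) (T : Finset E) (c : ℝ) (hc : 0 < c)
    (hf : ∀ a ∈ T, ∀ b ∈ T, dist (f a) (f b) = c * dist a b) :
    ((T.image f).offDiag.image fun p => dist p.1 p.2)
      = (T.offDiag.image fun p => dist p.1 p.2).image (fun d => c * d) := by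
  ext d
  constructor
  · intro hd
    obtain ⟨p, hp, rfl⟩ := Finset.mem_image.mp hd
    obtain ⟨hx, hy, hxy⟩ := Finset.mem_offDiag.mp hp
    obtain ⟨a, ha, ha'⟩ := Finset.mem_image.mp hx
    obtain ⟨b, hb, hb'⟩ := Finset.mem_image.mp hy
    have hab : a ≠ b := fun h => hxy (by rw [← ha', ← hb', h])
    refine Finset.mem_image.mpr ⟨dist a b, Finset.mem_image.mpr
      ⟨(a, b), Finset.mem_offDiag.mpr ⟨ha, hb, hab⟩, rfl⟩, ?_⟩
    rw [← ha', ← hb', hf a ha b hb]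
  · intro hd
    obtain ⟨e, he, rfl⟩ := Finset.mem_image.mp hd
    obtain ⟨p, hp, rfl⟩ := Finset.mem_image.mp he
    obtain ⟨ha, hb, hab⟩ := Finset.mem_offDiag.mp hp
    have hne : f p.1 ≠ f p.2 := by
      intro h
      have := hf p.1 ha p.2 hb
      rw [h, dist_self] at this
      have := dist_pos.mpr hab
      nlinarith
    refine Finset.mem_image.mpr ⟨(f p.1, f p.2), Finset.mem_offDiag.mpr
      ⟨Finset.mem_image_of_mem f ha, Finset.mem_image_of_mem f hb, hne⟩, ?_⟩
    exact hf p.1 ha p.2 hb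

lemma sum_sq_sub_c (n s : ℕ) (hn : s ≤ n + 1) (A : Finset (Fin (n+1))) (hA : A.card = s) :
    ∑ i, (ind n A i - (s:ℝ)/(n+1))^2 = s - (s:ℝ)^2/(n+1) := by
  have key : ∀ i : Fin (n+1), (ind n A i - (s:ℝ)/(n+1))^2
      = (if i ∈ A then (1 - (s:ℝ)/(n+1))^2 - ((s:ℝ)/(n+1))^2 else 0) + ((s:ℝ)/(n+1))^2 := by
    intro i
    simp only [ind]
    by_cases h : i ∈ A <;> simp [h] <;> ring
  rw [Finset.sum_congr rfl (fun i _ => key i), Finset.sum_add_distrib]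
  simp only [Finset.sum_ite_mem, Finset.univ_inter, Finset.sum_const, hA,
    nsmul_eq_mul, Finset.card_univ, Fintype.card_fin]
  have hne : ((n:ℝ) + 1) ≠ 0 := by positivity
  push_cast
  field_simp
  ring

open scoped Classical in
theorem stmt_8 (n s : ℕ) (hs : 1 ≤ s) (hn : 2 * s ≤ n + 1)
    (X : Finset (EuclideanSpace ℝ (Fin (n + 1))))
    (hX : X = (Finset.univ.powersetCard s).image
      (fun A : Finset (Fin (n + 1)) =>
        (WithLp.toLp 2 (fun i => if i ∈ A then (1 : ℝ) else 0) : EuclideanSpace ℝ (Fin (n + 1))))) :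
    (∀ x ∈ X, ∑ i, x i = (s : ℝ)) ∧
    (∀ x ∈ X, ‖x‖ = Real.sqrt s) ∧
    ((X.offDiag.image fun p => dist p.1 p.2).card = s) ∧
    X.card = (n + 1).choose s ∧
    ∃ Y : Finset (EuclideanSpace ℝ (Fin n)),
      (∀ y ∈ Y, ‖y‖ = 1) ∧
      ((Y.offDiag.image fun p => dist p.1 p.2).card = s) ∧
      Y.card = (n + 1).choose s := by
  have h1 : ∀ x ∈ X, ∑ i, x i = (s : ℝ) := by
    intro x hx
    obtain ⟨A, hA, rfl⟩ := (mem_X n s x).mp (hX ▸ hx)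
    rw [sum_ind, hA]
  have h2 : ∀ x ∈ X, ‖x‖ = Real.sqrt s := by
    intro x hx
    obtain ⟨A, hA, rfl⟩ := (mem_X n s x).mp (hX ▸ hx)
    rw [norm_ind, hA]
  have h3 : (X.offDiag.image fun p => dist p.1 p.2).card = s := by
    rw [distset_eq n s hs hn X hX, card_sqrt_image]
  have h4 : X.card = (n + 1).choose s := by
    have hinj : Function.Injective
        (fun A : Finset (Fin (n + 1)) =>
          (WithLp.toLp 2 (fun i => if i ∈ A then (1 : ℝ) else 0) : EuclideanSpace ℝ (Fin (n + 1)))) :=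
      ind_inj n
    rw [hX, Finset.card_image_of_injective _ hinj, Finset.card_powersetCard,
      Finset.card_univ, Fintype.card_fin]
  refine ⟨h1, h2, h3, h4, ?_⟩
  -- part 5
  set K := LinearMap.ker (Lfun n) with hK
  have hfr : Module.finrank ℝ K = n := finrank_ker_Lfun n
  let b : OrthonormalBasis (Fin n) ℝ K := (stdOrthonormalBasis ℝ K).reindex (finCongr hfr)
  let φ : K ≃ₗᵢ[ℝ] EuclideanSpace ℝ (Fin n) := b.repr
  set q : ℝ := (s : ℝ) / (n + 1) with hq
  set cvec : EuclideanSpace ℝ (Fin (n + 1)) := WithLp.toLp 2 (fun _ => q) with hc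
  set r2 : ℝ := (s : ℝ) - (s : ℝ) ^ 2 / (n + 1) with hr2def
  have hnn : (0:ℝ) < (n:ℝ) + 1 := by positivity
  have hsn : (s:ℝ) ≤ (n:ℝ) + 1 := by exact_mod_cast by omega
  have hs1 : (1:ℝ) ≤ (s:ℝ) := by exact_mod_cast hs
  have hr2 : 0 < r2 := by
    rw [hr2def]
    rw [sub_pos, div_lt_iff₀ hnn]
    have hlt : (s:ℝ) < (n:ℝ) + 1 := by exact_mod_cast (by omega : s < n + 1)
    nlinarith [hs1, hlt]
  set r : ℝ := Real.sqrt r2 with hrdef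
  have hr : 0 < r := Real.sqrt_pos.mpr hr2
  set f : EuclideanSpace ℝ (Fin (n + 1)) → EuclideanSpace ℝ (Fin n) :=
    fun x => φ (Submodule.orthogonalProjection K (r⁻¹ • (x - cvec))) with hf
  have hmem : ∀ x ∈ X, r⁻¹ • (x - cvec) ∈ K := by
    intro x hx
    have hsum := h1 x hx
    rw [hK, LinearMap.mem_ker]
    show ∑ i, (r⁻¹ • (x - cvec)) i = 0
    have hterm : ∀ i, (r⁻¹ • (x - cvec)) i = r⁻¹ * (x i - q) := by
      intro i
      simp [PiLp.smul_apply, PiLp.sub_apply, hc]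
    rw [Finset.sum_congr rfl (fun i _ => hterm i), ← Finset.mul_sum,
      Finset.sum_sub_distrib, hsum]
    simp only [Finset.sum_const, Finset.card_univ, Fintype.card_fin, nsmul_eq_mul, hq]
    rw [mul_eq_zero]
    right
    push_cast
    field_simp
    simp
  have hfx : ∀ x ∈ X,
      ((Submodule.orthogonalProjection K (r⁻¹ • (x - cvec))) : EuclideanSpace ℝ (Fin (n + 1)))
        = r⁻¹ • (x - cvec) :=
    fun x hx => (Submodule.starProjection_eq_self_iff (K := K)).mpr (hmem x hx)
  have hnormsub : ∀ x ∈ X, ‖x - cvec‖ = r := by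
    intro x hx
    obtain ⟨A, hA, hxA⟩ := (mem_X n s x).mp (hX ▸ hx)
    rw [EuclideanSpace.norm_eq, hrdef]
    congr 1
    have : ∀ i, ‖(x - cvec) i‖ ^ 2 = (ind n A i - (s:ℝ)/(n+1)) ^ 2 := by
      intro i
      rw [Real.norm_eq_abs, sq_abs]
      congr 1
      simp [PiLp.sub_apply, hc, hq, ← hxA]
    rw [Finset.sum_congr rfl (fun i _ => this i), sum_sq_sub_c n s (by omega) A hA, hr2def]
  have hnorm1 : ∀ x ∈ X, ‖f x‖ = 1 := by
    intro x hx
    rw [hf]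
    simp only
    rw [φ.norm_map]
    have : ‖(Submodule.orthogonalProjection K (r⁻¹ • (x - cvec)))‖
        = ‖((Submodule.orthogonalProjection K (r⁻¹ • (x - cvec))) : EuclideanSpace ℝ (Fin (n + 1)))‖ := rfl
    rw [this, hfx x hx, norm_smul, hnormsub x hx, Real.norm_eq_abs,
      abs_of_pos (inv_pos.mpr hr), inv_mul_cancel₀ hr.ne']
  have hdist : ∀ a ∈ X, ∀ b ∈ X, dist (f a) (f b) = r⁻¹ * dist a b := by
    intro a ha b hb
    rw [hf]
    simp only
    rw [φ.dist_map, Subtype.dist_eq, hfx a ha, hfx b hb, dist_smul₀,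
      dist_sub_right, Real.norm_eq_abs, abs_of_pos (inv_pos.mpr hr)]
  have hrpos : (0:ℝ) < r⁻¹ := inv_pos.mpr hr
  refine ⟨X.image f, ?_, ?_, ?_⟩
  · intro y hy
    obtain ⟨x, hx, rfl⟩ := Finset.mem_image.mp hy
    exact hnorm1 x hx
  · have hds := congrArg Finset.card (distset_scale f X r⁻¹ hrpos hdist)
    rw [Finset.card_image_of_injOn (fun a _ b _ h => mul_left_cancel₀ hrpos.ne' h), h3] at hds
    convert hds
  · rw [Finset.card_image_of_injOn, h4]
    intro a ha b hb hab
    by_contra hne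
    have := hdist a ha b hb
    rw [hab, dist_self] at this
    have hd : dist a b ≠ 0 := dist_ne_zero.mpr hne
    have : r⁻¹ * dist a b ≠ 0 := mul_ne_zero hrpos.ne' hd
    simp_all
end

section
/- The vertices of a regular $(2s+1)$-gon inscribed in the unit circle $S^1$ form an $s$-distance set of cardinality $2s+1$, i.e., the set of pairwise Euclidean distances between distinct vertices has exactly $s$ elements. -/
open Real

lemma dist_formula_aux (n a b : ℝ) (hn : n ≠ 0) (x y : EuclideanSpace ℝ (Fin 2))
    (hx : x = ![Real.cos (2 * Real.pi * a / n), Real.sin (2 * Real.pi * a / n)])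
    (hy : y = ![Real.cos (2 * Real.pi * b / n), Real.sin (2 * Real.pi * b / n)]) :
    dist x y = 2 * |Real.sin (Real.pi * (a - b) / n)| := by
  set α := 2 * Real.pi * a / n with hα
  set β := 2 * Real.pi * b / n with hβ
  have hhalf : (α - β) / 2 = Real.pi * (a - b) / n := by
    rw [hα, hβ]; field_simp
  rw [EuclideanSpace.dist_eq, Fin.sum_univ_two, hx, hy]
  simp only [Matrix.cons_val_zero, Matrix.cons_val_one, Matrix.head_cons, Real.dist_eq]
  have h1 : |Real.cos α - Real.cos β| ^ 2 + |Real.sin α - Real.sin β| ^ 2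
      = (2 * Real.sin ((α - β) / 2)) ^ 2 := by
    rw [sq_abs, sq_abs]
    have hc := Real.cos_sub α β
    have hc2 := Real.cos_sq ((α - β) / 2)
    have hs2 : Real.sin ((α - β) / 2) ^ 2 = 1 - Real.cos ((α - β) / 2) ^ 2 :=
      Real.sin_sq _
    have h2 : 2 * ((α - β) / 2) = α - β := by ring
    rw [h2] at hc2
    have p1 := Real.sin_sq_add_cos_sq α
    have p2 := Real.sin_sq_add_cos_sq β
    nlinarith [hc, hc2, hs2, p1, p2]
  rw [h1, Real.sqrt_sq_eq_abs, abs_mul, hhalf]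
  norm_num

open scoped Classical in
theorem stmt_11 (s : ℕ) (hs : 1 ≤ s)
    (P : ℕ → EuclideanSpace ℝ (Fin 2))
    (hP : ∀ k, P k = ![Real.cos (2 * Real.pi * k / (2 * s + 1)),
                        Real.sin (2 * Real.pi * k / (2 * s + 1))])
    (V : Finset (EuclideanSpace ℝ (Fin 2)))
    (hV : V = (Finset.range (2 * s + 1)).image P) :
    (∀ v ∈ V, ‖v‖ = 1) ∧
    V.card = 2 * s + 1 ∧
    ((V.offDiag.image fun p => dist p.1 p.2).card = s) := by
  have hspos : (0:ℝ) < s := by exact_mod_cast hs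
  set N : ℝ := 2 * (s:ℝ) + 1 with hNdef
  have hNpos : 0 < N := by positivity
  have hN : N ≠ 0 := ne_of_gt hNpos
  -- distance formula
  have hdist : ∀ j k : ℕ, dist (P j) (P k)
      = 2 * |Real.sin (Real.pi * ((j:ℝ) - k) / N)| := by
    intro j k
    exact dist_formula_aux N j k hN (P j) (P k) (hP j) (hP k)
  -- positivity of sin for 1 ≤ m ≤ 2s
  have sinpos : ∀ m : ℕ, 1 ≤ m → m ≤ 2 * s →
      0 < Real.sin (Real.pi * (m:ℝ) / N) := by
    intro m h1 h2
    apply Real.sin_pos_of_pos_of_lt_pi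
    · have : (1:ℝ) ≤ m := by exact_mod_cast h1
      positivity
    · have hm : (m:ℝ) < N := by
        rw [hNdef]; push_cast
        have : (m:ℝ) ≤ 2 * s := by exact_mod_cast h2
        linarith
      rw [div_lt_iff₀ hNpos]
      nlinarith [Real.pi_pos]
  -- injectivity on range
  have hinj : Set.InjOn P (Finset.range (2 * s + 1)) := by
    intro j hj k hk hjk
    simp only [Finset.coe_range, Set.mem_Iio] at hj hk
    by_contra hne
    have hd0 : dist (P j) (P k) = 0 := by rw [hjk, dist_self]
    rw [hdist] at hd0
    -- wlog via cases
    have hxz : Real.sin (Real.pi * ((j:ℝ) - k) / N) = 0 := by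
      have habs : |Real.sin (Real.pi * ((j:ℝ) - k) / N)| = 0 := by linarith
      exact abs_eq_zero.mp habs
    rcases lt_or_gt_of_ne hne with h | h
    · -- j < k
      have h1 : 1 ≤ k - j := by omega
      have h2 : k - j ≤ 2 * s := by omega
      have hpos := sinpos (k - j) h1 h2
      have hcast : ((k - j : ℕ) : ℝ) = (k:ℝ) - j := by
        push_cast [Nat.cast_sub h.le]; ring
      rw [hcast] at hpos
      have heq : Real.pi * ((k:ℝ) - j) / N = -(Real.pi * ((j:ℝ) - k) / N) := by ring
      rw [heq, Real.sin_neg, hxz, neg_zero] at hpos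
      exact lt_irrefl 0 hpos
    · have h1 : 1 ≤ j - k := by omega
      have h2 : j - k ≤ 2 * s := by omega
      have hpos := sinpos (j - k) h1 h2
      have hcast : ((j - k : ℕ) : ℝ) = (j:ℝ) - k := by
        push_cast [Nat.cast_sub h.le]; ring
      rw [hcast, hxz] at hpos
      exact lt_irrefl 0 hpos
  refine ⟨?_, ?_, ?_⟩
  · -- norm 1
    intro v hv
    rw [hV, Finset.mem_image] at hv
    obtain ⟨k, _, rfl⟩ := hv
    have hn := EuclideanSpace.norm_eq (P k)
    rw [hn, hP k, Fin.sum_univ_two]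
    simp only [Matrix.cons_val_zero, Matrix.cons_val_one, Matrix.head_cons,
      Real.norm_eq_abs, sq_abs]
    rw [show Real.cos (2 * Real.pi * k / (2 * (s:ℝ) + 1)) ^ 2
        + Real.sin (2 * Real.pi * k / (2 * (s:ℝ) + 1)) ^ 2 = 1 by
      rw [add_comm]; exact Real.sin_sq_add_cos_sq _]
    exact Real.sqrt_one
  · rw [hV, Finset.card_image_of_injOn hinj, Finset.card_range]
  · -- distance set cardinality
    have hsym : ∀ j k : ℕ, |Real.sin (Real.pi * ((j:ℝ) - k) / N)|
        = |Real.sin (Real.pi * ((k:ℝ) - j) / N)| := by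
      intro j k
      rw [show Real.pi * ((k:ℝ) - j) / N = -(Real.pi * ((j:ℝ) - k) / N) by ring,
        Real.sin_neg, abs_neg]
    have hrep : ∀ j k : ℕ, k < j → j < 2 * s + 1 → ∃ d, d < s ∧
        2 * |Real.sin (Real.pi * ((j:ℝ) - k) / N)|
          = 2 * Real.sin (Real.pi * ((d:ℝ) + 1) / N) := by
      intro j k hkj hj
      set m := j - k with hm
      have h1 : 1 ≤ m := by omega
      have h2 : m ≤ 2 * s := by omega
      have hcast : ((m : ℕ) : ℝ) = (j:ℝ) - k := by
        rw [hm, Nat.cast_sub hkj.le]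
      by_cases hms : m ≤ s
      · refine ⟨m - 1, by omega, ?_⟩
        have hc2 : ((m - 1 : ℕ) : ℝ) + 1 = (m:ℝ) := by
          rw [Nat.cast_sub h1]; ring
        rw [hc2, ← hcast, abs_of_pos (sinpos m h1 h2)]
      · refine ⟨2 * s - m, by omega, ?_⟩
        have hc2 : ((2 * s - m : ℕ) : ℝ) + 1 = N - (m:ℝ) := by
          rw [hNdef, Nat.cast_sub h2]; push_cast; ring
        rw [hc2, ← hcast]
        have hpisub : Real.pi * (N - (m:ℝ)) / N = Real.pi - Real.pi * m / N := by
          field_simp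
        rw [hpisub, Real.sin_pi_sub, abs_of_pos (sinpos m h1 h2)]
    have himg : V.offDiag.image (fun p => dist p.1 p.2)
        = (Finset.range s).image
            (fun d : ℕ => 2 * Real.sin (Real.pi * ((d:ℝ) + 1) / N)) := by
      apply Finset.Subset.antisymm
      · intro x hx
        rw [Finset.mem_image] at hx
        obtain ⟨p, hp, rfl⟩ := hx
        rw [Finset.mem_offDiag] at hp
        obtain ⟨hp1, hp2, hpne⟩ := hp
        rw [hV, Finset.mem_image] at hp1 hp2
        obtain ⟨j, hj, hj'⟩ := hp1
        obtain ⟨k, hk, hk'⟩ := hp2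
        rw [Finset.mem_range] at hj hk
        have hjk : j ≠ k := by
          intro h; apply hpne; rw [← hj', ← hk', h]
        simp only [← hj', ← hk', hdist j k]
        rcases lt_or_gt_of_ne hjk with h | h
        · obtain ⟨d, hd, hde⟩ := hrep k j h hk
          rw [Finset.mem_image]
          exact ⟨d, Finset.mem_range.mpr hd, by rw [← hde, hsym j k]⟩
        · obtain ⟨d, hd, hde⟩ := hrep j k h hj
          rw [Finset.mem_image]
          exact ⟨d, Finset.mem_range.mpr hd, by rw [← hde]⟩
      · intro x hx
        rw [Finset.mem_image] at hx
        obtain ⟨d, hd, rfl⟩ := hx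
        rw [Finset.mem_range] at hd
        rw [Finset.mem_image]
        have hd1 : d + 1 < 2 * s + 1 := by omega
        have h0 : (0:ℕ) < 2 * s + 1 := by omega
        have hne : P (d + 1) ≠ P 0 := by
          intro h
          have := hinj (by simpa using hd1) (by simpa using h0) h
          omega
        refine ⟨(P (d + 1), P 0), ?_, ?_⟩
        · rw [Finset.mem_offDiag]
          refine ⟨?_, ?_, hne⟩
          · rw [hV]; exact Finset.mem_image_of_mem P (Finset.mem_range.mpr hd1)
          · rw [hV]; exact Finset.mem_image_of_mem P (Finset.mem_range.mpr h0)
        · show dist (P (d+1)) (P 0) = _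
          rw [hdist]
          have hc : ((d + 1 : ℕ) : ℝ) - ((0:ℕ):ℝ) = (d:ℝ) + 1 := by push_cast; ring
          rw [hc, abs_of_pos (by
            have := sinpos (d + 1) (by omega) (by omega)
            rwa [show (((d + 1 : ℕ)) : ℝ) = (d:ℝ) + 1 by push_cast; ring] at this)]
    rw [himg]
    rw [Finset.card_image_of_injOn, Finset.card_range]
    intro d hd e he heq
    simp only [Finset.coe_range, Set.mem_Iio] at hd he
    have hbound : ∀ c : ℕ, c < s →
        Real.pi * ((c:ℝ) + 1) / N ∈ Set.Icc (-(Real.pi/2)) (Real.pi/2) := by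
      intro c hc
      constructor
      · have : (0:ℝ) ≤ Real.pi * ((c:ℝ) + 1) / N := by positivity
        linarith [Real.pi_pos]
      · rw [div_le_iff₀ hNpos, hNdef]
        have : (c:ℝ) + 1 ≤ s := by
          have : (c:ℝ) + 1 ≤ (s:ℝ) := by exact_mod_cast hc
          linarith
        nlinarith [Real.pi_pos]
    have heq2 : Real.sin (Real.pi * ((d:ℝ) + 1) / N)
        = Real.sin (Real.pi * ((e:ℝ) + 1) / N) := by linarith
    have h3 := Real.injOn_sin (hbound d hd) (hbound e he) heq2
    field_simp at h3
    have h4 : (d:ℝ) = e := by linarith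
    exact_mod_cast h4
end
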